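/- Let X be a normed space, p ≥ 1, and let g : ℝ → X be strongly measurable with ‖g(·)‖^p locally integrable. Fix α > 0, h > 0, τ ∈ ℝ and M ≥ 0. If g is pullback translation bounded with bound M, i.e. ∫_{s−h}^{s} ‖g(r)‖^p dr ≤ M for every s ≤ τ, then g is pullback tempered; more precisely, for every s ≤ τ one has ∫_{−∞}^{s} e^{α(r−s)} ‖g(r)‖^p dr ≤ M/(1 − e^{−αh}) < ∞. -/

import Mathlib

open MeasureTheory Filter

/-- If `g` is pullback translation bounded with bound `M` (relative to final time `τ`
and window `h`), then it is pullback tempered with rate `α`: for every `s ≤ τ`,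
`∫_{-∞}^{s} e^{α(r-s)} ‖g r‖^p dr ≤ M / (1 - e^{-αh}) < ∞`. -/
theorem pullback_translation_bounded_implies_pullback_tempered
    {X : Type*} [NormedAddCommGroup X]
    (p : ℝ) (hp : 1 ≤ p) (g : ℝ → X)
    (hg : StronglyMeasurable g)
    (hloc : LocallyIntegrable (fun r => ‖g r‖ ^ p) volume)
    (α h τ M : ℝ) (hα : 0 < α) (hh : 0 < h) (hM : 0 ≤ M)
    (htb : ∀ s ≤ τ,
      ∫⁻ r in Set.Ioc (s - h) s, ENNReal.ofReal (‖g r‖ ^ p) ≤ ENNReal.ofReal M) :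
    ∀ s ≤ τ,
      (∫⁻ r in Set.Iic s, ENNReal.ofReal (Real.exp (α * (r - s)) * ‖g r‖ ^ p))
          ≤ ENNReal.ofReal (M / (1 - Real.exp (-α * h))) ∧
      ENNReal.ofReal (M / (1 - Real.exp (-α * h))) < ⊤ := by
  intro s hs
  refine ⟨?_, ENNReal.ofReal_lt_top⟩
  set c := Real.exp (-α * h) with hc_def
  have hc0 : 0 < c := Real.exp_pos _
  have hc1 : c < 1 := by
    rw [hc_def]
    apply Real.exp_lt_one_iff.mpr
    nlinarith
  set S : ℕ → Set ℝ := fun n => Set.Ioc (s - (n + 1) * h) (s - n * h) with hS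
  have hunion : Set.Iic s = ⋃ n, S n := by
    ext r
    simp only [Set.mem_Iic, Set.mem_iUnion, hS, Set.mem_Ioc]
    constructor
    · intro hr
      refine ⟨Nat.floor ((s - r) / h), ?_, ?_⟩
      · have h2 := Nat.lt_floor_add_one ((s - r) / h)
        rw [div_lt_iff₀ hh] at h2
        push_cast at h2 ⊢
        linarith
      · have h2 := Nat.floor_le (R := ℝ) (a := (s - r) / h)
          (div_nonneg (by linarith) hh.le)
        rw [le_div_iff₀ hh] at h2
        linarith
    · rintro ⟨n, _, h2⟩
      have hn : (0 : ℝ) ≤ n * h := by positivity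
      linarith
  have hmeas : ∀ n, MeasurableSet (S n) := fun n => measurableSet_Ioc
  have hdisj : Pairwise (Function.onFun Disjoint S) := by
    intro m n hmn
    rw [Function.onFun]
    simp only [hS]
    rw [Set.Ioc_disjoint_Ioc]
    rcases Ne.lt_or_gt hmn with h' | h'
    · have hle : (m : ℝ) + 1 ≤ n := by exact_mod_cast h'
      calc min (s - m * h) (s - n * h) ≤ s - n * h := min_le_right _ _
        _ ≤ s - (m + 1) * h := by nlinarith
        _ ≤ max (s - (m + 1) * h) (s - (n + 1) * h) := le_max_left _ _
    · have hle : (n : ℝ) + 1 ≤ m := by exact_mod_cast h'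
      calc min (s - m * h) (s - n * h) ≤ s - m * h := min_le_left _ _
        _ ≤ s - (n + 1) * h := by nlinarith
        _ ≤ max (s - (m + 1) * h) (s - (n + 1) * h) := le_max_right _ _
  have hnormmeas : Measurable fun r => ENNReal.ofReal (‖g r‖ ^ p) :=
    ENNReal.measurable_ofReal.comp (((Real.continuous_rpow_const (by linarith : (0:ℝ) ≤ p)).measurable.comp hg.norm.measurable))
  have hbound : ∀ n, (∫⁻ r in S n,
      ENNReal.ofReal (Real.exp (α * (r - s)) * ‖g r‖ ^ p))
      ≤ ENNReal.ofReal (c ^ n) * ENNReal.ofReal M := by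
    intro n
    have h1 : (∫⁻ r in S n, ENNReal.ofReal (Real.exp (α * (r - s)) * ‖g r‖ ^ p))
        ≤ ∫⁻ r in S n, ENNReal.ofReal (c ^ n) * ENNReal.ofReal (‖g r‖ ^ p) := by
      apply setLIntegral_mono (measurable_const.mul hnormmeas)
      intro r hr
      simp only [Pi.mul_apply]
      rw [← ENNReal.ofReal_mul (by positivity)]
      apply ENNReal.ofReal_le_ofReal
      apply mul_le_mul_of_nonneg_right _ (Real.rpow_nonneg (norm_nonneg _) p)
      have hcn : c ^ n = Real.exp (n * (-α * h)) := (Real.exp_nat_mul _ n).symm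
      rw [hcn]
      apply Real.exp_le_exp.mpr
      have hr2 : r ≤ s - n * h := hr.2
      nlinarith
    have h2 : (∫⁻ r in S n, ENNReal.ofReal (c ^ n) * ENNReal.ofReal (‖g r‖ ^ p))
        = ENNReal.ofReal (c ^ n) * ∫⁻ r in S n, ENNReal.ofReal (‖g r‖ ^ p) :=
      lintegral_const_mul' _ _ ENNReal.ofReal_ne_top
    have h3 : (∫⁻ r in S n, ENNReal.ofReal (‖g r‖ ^ p)) ≤ ENNReal.ofReal M := by
      have heq : S n = Set.Ioc ((s - n * h) - h) (s - n * h) := by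
        simp only [hS]
        congr 1
        ring
      rw [heq]
      apply htb
      have hn : (0 : ℝ) ≤ n * h := by positivity
      linarith
    calc (∫⁻ r in S n, ENNReal.ofReal (Real.exp (α * (r - s)) * ‖g r‖ ^ p))
        ≤ ENNReal.ofReal (c ^ n) * ∫⁻ r in S n, ENNReal.ofReal (‖g r‖ ^ p) := by
          rw [← h2]; exact h1
      _ ≤ ENNReal.ofReal (c ^ n) * ENNReal.ofReal M :=
          mul_le_mul_right h3 _
  rw [hunion, lintegral_iUnion hmeas hdisj]
  calc (∑' n, ∫⁻ r in S n, ENNReal.ofReal (Real.exp (α * (r - s)) * ‖g r‖ ^ p))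
      ≤ ∑' n, ENNReal.ofReal (c ^ n) * ENNReal.ofReal M :=
        ENNReal.tsum_le_tsum hbound
    _ = (∑' n, (ENNReal.ofReal c) ^ n) * ENNReal.ofReal M := by
        rw [ENNReal.tsum_mul_right]
        congr 1
        exact tsum_congr fun n => by rw [ENNReal.ofReal_pow hc0.le]
    _ = (1 - ENNReal.ofReal c)⁻¹ * ENNReal.ofReal M := by
        rw [ENNReal.tsum_geometric]
    _ = ENNReal.ofReal (M / (1 - c)) := by
        rw [ENNReal.ofReal_div_of_pos (by linarith), div_eq_mul_inv, mul_comm]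
        congr 1
        rw [ENNReal.ofReal_sub 1 hc0.le, ENNReal.ofReal_one]
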